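/- The third derivative of the amplifier function at 0 equals −√(2/π)·(E[X⁴] − 3E[X²]); in particular, when X has unit variance, φ'''(0) is positive if and only if the excess kurtosis E[X⁴] − 3 is negative. -/

import Mathlib

open MeasureTheory Real

noncomputable def erf (x : ℝ) : ℝ := (2 / Real.sqrt π) * ∫ s in (0:ℝ)..x, Real.exp (-s ^ 2)

noncomputable def algInv (a : ℝ) : ℝ := a / Real.sqrt (1 - a ^ 2)

section Aux

lemma contExpSq : Continuous fun s : ℝ => Real.exp (-s ^ 2) :=
  (continuous_pow 2).neg.rexp

lemma hasDerivAt_erf (x : ℝ) :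
    HasDerivAt erf ((2 / Real.sqrt π) * Real.exp (-x ^ 2)) x :=
  ((contExpSq.integral_hasStrictDerivAt 0 x).hasDerivAt.const_mul (2 / Real.sqrt π))

lemma continuous_erf : Continuous erf := by
  have : Differentiable ℝ erf := fun x => (hasDerivAt_erf x).differentiableAt
  exact this.continuous

lemma abs_erf_le (x : ℝ) : |erf x| ≤ (2 / Real.sqrt π) * |x| := by
  have h : ‖∫ s in (0:ℝ)..x, Real.exp (-s ^ 2)‖ ≤ 1 * |x - 0| := by
    apply intervalIntegral.norm_integral_le_of_norm_le_const
    intro s _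
    rw [Real.norm_eq_abs, abs_of_pos (Real.exp_pos _)]
    exact Real.exp_le_one_iff.2 (by nlinarith [sq_nonneg s])
  have h2 : (0:ℝ) ≤ 2 / Real.sqrt π := by positivity
  calc |erf x| = (2 / Real.sqrt π) * |∫ s in (0:ℝ)..x, Real.exp (-s ^ 2)| := by
        rw [erf, abs_mul, abs_of_nonneg h2]
    _ ≤ (2 / Real.sqrt π) * |x| := by
        apply mul_le_mul_of_nonneg_left _ h2
        simpa using h

lemma hasDerivAt_mul_of_zero {f h : ℝ → ℝ} {f' : ℝ}
    (hf : HasDerivAt f f' 0) (h0 : f 0 = 0) (hh : ContinuousAt h 0) :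
    HasDerivAt (fun a => f a * h a) (f' * h 0) 0 := by
  rw [hasDerivAt_iff_tendsto_slope] at hf ⊢
  have hs : ∀ a : ℝ, a ≠ 0 → slope (fun a => f a * h a) 0 a = slope f 0 a * h a := by
    intro a ha
    simp [slope_def_field, h0, div_mul_eq_mul_div, mul_div_assoc]
  have : Filter.Tendsto (fun a => slope f 0 a * h a) (nhdsWithin 0 {(0:ℝ)}ᶜ) (nhds (f' * h 0)) :=
    hf.mul (hh.continuousWithinAt.tendsto)
  exact this.congr' (by filter_upwards [self_mem_nhdsWithin] with a ha; exact (hs a ha).symm)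

section Param
variable {μ : Measure ℝ} [IsProbabilityMeasure μ] {M : ℝ}

lemma integrable_of_cont_bound (hbdd : ∀ᵐ x ∂μ, |x| ≤ M) {f : ℝ → ℝ} (hf : Continuous f) {C : ℝ}
    (hC : ∀ x : ℝ, |x| ≤ M → |f x| ≤ C) : Integrable f μ := by
  refine Integrable.mono' (integrable_const C) hf.aestronglyMeasurable ?_
  filter_upwards [hbdd] with x hx
  rw [Real.norm_eq_abs]; exact hC x hx

lemma L1 (hbdd : ∀ᵐ x ∂μ, |x| ≤ M) (t : ℝ) :
    HasDerivAt (fun t => ∫ x, x * erf (x * t) ∂μ)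
      ((2 / Real.sqrt π) * ∫ x, x ^ 2 * Real.exp (-(x * t) ^ 2) ∂μ) t := by
  have hc : (0:ℝ) ≤ 2 / Real.sqrt π := by positivity
  have key := hasDerivAt_integral_of_dominated_loc_of_deriv_le (μ := μ)
      (F := fun t x => x * erf (x * t))
      (F' := fun t x => (2 / Real.sqrt π) * (x ^ 2 * Real.exp (-(x * t) ^ 2)))
      (x₀ := t) (bound := fun _ => (2 / Real.sqrt π) * M ^ 2) (Metric.ball_mem_nhds t one_pos)
      (Filter.Eventually.of_forall fun t =>
        (continuous_id.mul (continuous_erf.comp (continuous_id.mul continuous_const))).aestronglyMeasurable)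
      ?_ ?_ ?_ ?_ ?_
  · have := key.2
    rwa [integral_const_mul] at this
  · -- integrability of F t
    apply integrable_of_cont_bound hbdd
      (hf := continuous_id.mul (continuous_erf.comp (continuous_id.mul continuous_const)))
      (C := M * ((2 / Real.sqrt π) * (M * |t|)))
    intro x hx
    have h1 := abs_erf_le (x * t)
    have hM0 : 0 ≤ M := (abs_nonneg x).trans hx
    calc |x * erf (x * t)| = |x| * |erf (x * t)| := abs_mul _ _
      _ ≤ M * ((2 / Real.sqrt π) * (M * |t|)) := by
          rw [abs_mul] at h1
          apply mul_le_mul hx (h1.trans ?_) (abs_nonneg _) hM0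
          · exact mul_le_mul_of_nonneg_left
              (mul_le_mul_of_nonneg_right hx (abs_nonneg t)) hc
  · exact ((continuous_const.mul ((continuous_pow 2).mul
      (((continuous_id.mul continuous_const).pow 2).neg.rexp))).aestronglyMeasurable)
  · filter_upwards [hbdd] with x hx u _
    have he : Real.exp (-(x * u) ^ 2) ≤ 1 := Real.exp_le_one_iff.2 (by nlinarith [sq_nonneg (x*u)])
    have he0 : 0 < Real.exp (-(x * u) ^ 2) := Real.exp_pos _
    rw [Real.norm_eq_abs, abs_mul, abs_of_nonneg hc, abs_mul, abs_of_nonneg (sq_nonneg x),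
      abs_of_pos he0]
    apply mul_le_mul_of_nonneg_left _ hc
    have : x ^ 2 ≤ M ^ 2 := by nlinarith [abs_nonneg x, sq_abs x]
    nlinarith
  · exact integrable_const _
  · filter_upwards with x u _
    have h1 : HasDerivAt (fun u => x * u) x u := by
      simpa using (hasDerivAt_id u).const_mul x
    have h2 := ((hasDerivAt_erf (x * u)).comp u h1).const_mul x
    refine h2.congr_deriv (Eq.symm ?_)
    ring

lemma L2 (hbdd : ∀ᵐ x ∂μ, |x| ≤ M) (t : ℝ) :
    HasDerivAt (fun t => ∫ x, x ^ 2 * Real.exp (-(x * t) ^ 2) ∂μ)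
      (-2 * t * ∫ x, x ^ 4 * Real.exp (-(x * t) ^ 2) ∂μ) t := by
  have key := hasDerivAt_integral_of_dominated_loc_of_deriv_le (μ := μ)
      (F := fun t x => x ^ 2 * Real.exp (-(x * t) ^ 2))
      (F' := fun t x => (-2 * t) * (x ^ 4 * Real.exp (-(x * t) ^ 2)))
      (x₀ := t) (bound := fun _ => 2 * (|t| + 1) * M ^ 4) (Metric.ball_mem_nhds t one_pos)
      (Filter.Eventually.of_forall fun t =>
        ((continuous_pow 2).mul (((continuous_id.mul continuous_const).pow 2).neg.rexp)).aestronglyMeasurable)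
      ?_ ?_ ?_ ?_ ?_
  · have := key.2
    rwa [integral_const_mul] at this
  · apply integrable_of_cont_bound hbdd
      (hf := (continuous_pow 2).mul (((continuous_id.mul continuous_const).pow 2).neg.rexp))
      (C := M ^ 2)
    intro x hx
    simp only [Pi.mul_apply, Pi.pow_apply, Pi.neg_apply, id_eq]
    have he : Real.exp (-(x * t) ^ 2) ≤ 1 := Real.exp_le_one_iff.2 (by nlinarith [sq_nonneg (x*t)])
    have he0 : 0 < Real.exp (-(x * t) ^ 2) := Real.exp_pos _
    rw [abs_mul, abs_of_nonneg (sq_nonneg x), abs_of_pos he0]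
    have : x ^ 2 ≤ M ^ 2 := by nlinarith [abs_nonneg x, sq_abs x]
    nlinarith
  · exact (continuous_const.mul ((continuous_pow 4).mul
      (((continuous_id.mul continuous_const).pow 2).neg.rexp))).aestronglyMeasurable
  · filter_upwards [hbdd] with x hx u hu
    have he : Real.exp (-(x * u) ^ 2) ≤ 1 := Real.exp_le_one_iff.2 (by nlinarith [sq_nonneg (x*u)])
    have he0 : 0 < Real.exp (-(x * u) ^ 2) := Real.exp_pos _
    have hut : |u| ≤ |t| + 1 := by
      have := abs_sub_abs_le_abs_sub u t
      simp [Metric.mem_ball, Real.dist_eq] at hu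
      linarith [le_of_lt hu]
    have hx2 : x ^ 2 ≤ M ^ 2 := by nlinarith [abs_nonneg x, sq_abs x]
    have hx4 : x ^ 4 ≤ M ^ 4 := by nlinarith [sq_nonneg x, sq_nonneg M]
    have hM0 : 0 ≤ M := (abs_nonneg x).trans hx
    have hnn : (0:ℝ) ≤ x ^ 4 * Real.exp (-(x * u) ^ 2) := by positivity
    have habs : ‖(-2 : ℝ) * u * (x ^ 4 * Real.exp (-(x * u) ^ 2))‖
        = 2 * |u| * (x ^ 4 * Real.exp (-(x * u) ^ 2)) := by
      rw [Real.norm_eq_abs, abs_mul, abs_of_nonneg hnn, abs_mul]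
      norm_num
    rw [habs]
    have hx4e : x ^ 4 * Real.exp (-(x * u) ^ 2) ≤ M ^ 4 := by nlinarith [sq_nonneg x]
    have h2 : 2 * |u| ≤ 2 * (|t| + 1) := by linarith
    have := mul_le_mul h2 hx4e hnn (by positivity)
    linarith
  · exact integrable_const _
  · filter_upwards with x u _
    have h1 : HasDerivAt (fun u => x * u) x u := by
      simpa using (hasDerivAt_id u).const_mul x
    have h2 : HasDerivAt (fun u => -(x * u) ^ 2) (-(2 * (x * u) * x)) u := by
      simpa using ((h1.fun_pow 2)).fun_neg
    have h3 := (h2.exp).const_mul (x ^ 2)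
    refine h3.congr_deriv (Eq.symm ?_)
    ring

lemma chi_cont (hbdd : ∀ᵐ x ∂μ, |x| ≤ M) :
    ContinuousAt (fun t => ∫ x, x ^ 4 * Real.exp (-(x * t) ^ 2) ∂μ) 0 := by
  apply continuousAt_of_dominated (bound := fun x => M ^ 4)
  · filter_upwards with t
    exact ((continuous_pow 4).mul (((continuous_id.mul continuous_const).pow 2).neg.rexp)).aestronglyMeasurable
  · filter_upwards with t
    filter_upwards [hbdd] with x hx
    have he : Real.exp (-(x * t) ^ 2) ≤ 1 := Real.exp_le_one_iff.2 (by nlinarith [sq_nonneg (x*t)])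
    have he0 : 0 < Real.exp (-(x * t) ^ 2) := Real.exp_pos _
    have hx2 : x ^ 2 ≤ M ^ 2 := by nlinarith [abs_nonneg x, sq_abs x]
    have hx4 : x ^ 4 ≤ M ^ 4 := by nlinarith [sq_nonneg x, sq_nonneg M]
    rw [Real.norm_eq_abs, abs_mul, abs_of_nonneg (by positivity : (0:ℝ) ≤ x ^ 4), abs_of_pos he0]
    nlinarith [sq_nonneg x, sq_nonneg (x^2)]
  · exact integrable_const _
  · filter_upwards with x
    exact ((continuous_const.mul (((continuous_const.mul continuous_id).pow 2).neg.rexp)).continuousAt :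
      ContinuousAt (fun t : ℝ => x ^ 4 * Real.exp (-(x * t) ^ 2)) 0)

end Param

noncomputable def sq1 (a : ℝ) : ℝ := Real.sqrt (1 - a ^ 2)
noncomputable def gg (a : ℝ) : ℝ := algInv a / Real.sqrt 2
noncomputable def G1 (a : ℝ) : ℝ := 1 / (Real.sqrt 2 * sq1 a ^ 3)
noncomputable def G2 (a : ℝ) : ℝ := 3 * a / (Real.sqrt 2 * sq1 a ^ 5)

lemma sqrt2_pos : (0:ℝ) < Real.sqrt 2 := by positivity

section calc1
variable {a : ℝ}

lemma one_sub_pos (ha : a ∈ Set.Ioo (-1:ℝ) 1) : 0 < 1 - a ^ 2 := by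
  obtain ⟨h1, h2⟩ := ha; nlinarith

lemma sq1_pos (ha : a ∈ Set.Ioo (-1:ℝ) 1) : 0 < sq1 a :=
  Real.sqrt_pos.2 (one_sub_pos ha)

lemma sq1_sq (ha : a ∈ Set.Ioo (-1:ℝ) 1) : sq1 a ^ 2 = 1 - a ^ 2 :=
  Real.sq_sqrt (one_sub_pos ha).le

lemma hasDerivAt_sq1 (ha : a ∈ Set.Ioo (-1:ℝ) 1) :
    HasDerivAt sq1 (-a / sq1 a) a := by
  have h1 : HasDerivAt (fun a : ℝ => 1 - a ^ 2) (-(2 * a)) a := by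
    simpa using ((hasDerivAt_pow 2 a).const_sub 1)
  have := h1.sqrt (ne_of_gt (one_sub_pos ha))
  refine this.congr_deriv (Eq.symm ?_)
  have hsp : 0 < Real.sqrt (1 - a ^ 2) := Real.sqrt_pos.2 (one_sub_pos ha)
  rw [sq1]
  field_simp

lemma hasDerivAt_gg (ha : a ∈ Set.Ioo (-1:ℝ) 1) :
    HasDerivAt gg (G1 a) a := by
  have hs := hasDerivAt_sq1 ha
  have hsp := sq1_pos ha
  have h1 : HasDerivAt (fun a => a / sq1 a) ((1 * sq1 a - a * (-a / sq1 a)) / sq1 a ^ 2) a :=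
    (hasDerivAt_id a).div hs (ne_of_gt hsp)
  have h2 := h1.div_const (Real.sqrt 2)
  have : (fun a => a / sq1 a / Real.sqrt 2) = gg := by
    funext b; rw [gg, algInv, sq1]
  rw [this] at h2
  refine h2.congr_deriv (Eq.symm ?_)
  rw [G1]
  have hq := sq1_sq ha
  field_simp
  linear_combination (-1 : ℝ) * hq

lemma hasDerivAt_G1 (ha : a ∈ Set.Ioo (-1:ℝ) 1) :
    HasDerivAt G1 (G2 a) a := by
  have hs := hasDerivAt_sq1 ha
  have hsp := sq1_pos ha
  have h1 : HasDerivAt (fun a => Real.sqrt 2 * sq1 a ^ 3)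
      (Real.sqrt 2 * (3 * sq1 a ^ 2 * (-a / sq1 a))) a := by
    simpa using ((hs.pow 3).const_mul (Real.sqrt 2))
  have h2 : HasDerivAt (fun a => (Real.sqrt 2 * sq1 a ^ 3)⁻¹) _ a := h1.inv (by positivity)
  have : (fun a => (Real.sqrt 2 * sq1 a ^ 3)⁻¹) = G1 := by
    funext b; rw [G1, one_div]
  rw [this] at h2
  convert h2 using 1
  rw [G2]
  field_simp
end calc1

lemma sq1_zero : sq1 0 = 1 := by simp [sq1]
lemma gg_zero : gg 0 = 0 := by simp [gg, algInv]
lemma G1_zero : G1 0 = 1 / Real.sqrt 2 := by simp [G1, sq1_zero]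
lemma G2_zero : G2 0 = 0 := by simp [G2]

lemma hasDerivAt_G2_zero : HasDerivAt G2 (3 / Real.sqrt 2) 0 := by
  have h0 : (0:ℝ) ∈ Set.Ioo (-1:ℝ) 1 := by norm_num
  have hs := hasDerivAt_sq1 h0
  rw [sq1_zero] at hs
  simp only [neg_zero, zero_div] at hs
  have h1 : HasDerivAt (fun a => Real.sqrt 2 * sq1 a ^ 5) 0 0 := by
    have := (hs.pow 5).const_mul (Real.sqrt 2)
    simpa [sq1_zero] using this
  have hnum : HasDerivAt (fun a : ℝ => 3 * a) 3 0 := by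
    simpa using (hasDerivAt_id (0:ℝ)).const_mul 3
  have h2 : HasDerivAt (fun a => 3 * a / (Real.sqrt 2 * sq1 a ^ 5)) _ 0 := hnum.div h1 (by rw [sq1_zero]; simp [ne_of_gt sqrt2_pos])
  have : (fun a => 3 * a / (Real.sqrt 2 * sq1 a ^ 5)) = G2 := by
    funext b; rw [G2]
  rw [this] at h2
  convert h2 using 1
  rw [sq1_zero, one_pow, mul_one, Real.sq_sqrt (by norm_num : (0:ℝ) ≤ 2)]
  rw [div_eq_div_iff (ne_of_gt sqrt2_pos) (by norm_num : (2:ℝ) ≠ 0)]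
  linear_combination (-3 : ℝ) * (Real.sq_sqrt (show (0:ℝ) ≤ 2 by norm_num))

end Aux

theorem amplifier_third_deriv_at_zero
    (μ : Measure ℝ) [IsProbabilityMeasure μ]
    (M : ℝ) (hbdd : ∀ᵐ x ∂μ, |x| ≤ M)
    (hsymm : Measure.map (fun x : ℝ => -x) μ = μ)
    (φ : ℝ → ℝ)
    (hφ : ∀ a ∈ Set.Ioo (-1 : ℝ) 1,
      φ a = ∫ x, x * erf (x * algInv a / Real.sqrt 2) ∂μ) :
    iteratedDeriv 3 φ 0 = Real.sqrt (2 / π) * (3 * ∫ x, x ^ 2 ∂μ - ∫ x, x ^ 4 ∂μ) ∧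
      ((∫ x, x ^ 2 ∂μ) = 1 →
        (0 < iteratedDeriv 3 φ 0 ↔ (∫ x, x ^ 4 ∂μ) - 3 < 0)) := by
  set ψ : ℝ → ℝ := fun t => ∫ x, x * erf (x * t) ∂μ with hψ
  set ψ₁ : ℝ → ℝ := fun t => ∫ x, x ^ 2 * Real.exp (-(x * t) ^ 2) ∂μ with hψ₁
  set χ : ℝ → ℝ := fun t => ∫ x, x ^ 4 * Real.exp (-(x * t) ^ 2) ∂μ with hχ
  set D1 : ℝ → ℝ := fun a => (2 / Real.sqrt π) * ψ₁ (gg a) * G1 a with hD1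
  set D2 : ℝ → ℝ := fun a =>
    (2 / Real.sqrt π) * (gg a * (-2 * χ (gg a) * (G1 a * G1 a)) + G2 a * ψ₁ (gg a)) with hD2
  have h0 : (0:ℝ) ∈ Set.Ioo (-1:ℝ) 1 := by norm_num
  have hIoo : Set.Ioo (-1:ℝ) 1 ∈ nhds (0:ℝ) := isOpen_Ioo.mem_nhds h0
  -- φ agrees with ψ ∘ gg on Ioo
  have hφψ : ∀ a ∈ Set.Ioo (-1:ℝ) 1, φ a = (ψ ∘ gg) a := by
    intro a ha
    rw [hφ a ha]
    simp only [Function.comp, hψ, gg, mul_div_assoc]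
  -- first derivative
  have h1 : ∀ a ∈ Set.Ioo (-1:ℝ) 1, HasDerivAt φ (D1 a) a := by
    intro a ha
    have hg := hasDerivAt_gg ha
    have hc := (L1 hbdd (gg a)).comp a hg
    have hev : φ =ᶠ[nhds a] (ψ ∘ gg) := by
      filter_upwards [isOpen_Ioo.mem_nhds ha] with b hb using hφψ b hb
    exact (hc.congr_of_eventuallyEq hev :)
  -- second derivative
  have h2 : ∀ a ∈ Set.Ioo (-1:ℝ) 1, HasDerivAt D1 (D2 a) a := by
    intro a ha
    have hg := hasDerivAt_gg ha
    have hA : HasDerivAt (fun a => ψ₁ (gg a)) (-2 * gg a * χ (gg a) * G1 a) a := by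
      have := (L2 hbdd (gg a)).comp a hg
      exact (this :)
    have hmul := (hA.const_mul (2 / Real.sqrt π)).mul (hasDerivAt_G1 ha)
    refine hmul.congr_deriv (Eq.symm ?_)
    ring
  have hd1 : deriv φ =ᶠ[nhds 0] D1 := by
    filter_upwards [hIoo] with a ha using (h1 a ha).deriv
  have hd2 : deriv (deriv φ) =ᶠ[nhds 0] D2 := by
    have e1 := hd1.deriv
    filter_upwards [e1, hIoo] with a hea ha
    rw [hea, (h2 a ha).deriv]
  -- third derivative at 0
  have hψ₁cont : ContinuousAt (fun a => ψ₁ (gg a)) 0 := by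
    have : ContinuousAt ψ₁ (gg 0) := by
      rw [gg_zero]; exact (L2 hbdd 0).differentiableAt.continuousAt
    exact this.comp (hasDerivAt_gg h0).differentiableAt.continuousAt
  have hχcont : ContinuousAt (fun a => χ (gg a)) 0 := by
    have : ContinuousAt χ (gg 0) := by
      rw [gg_zero]; exact chi_cont hbdd
    exact this.comp (hasDerivAt_gg h0).differentiableAt.continuousAt
  have hG1cont : ContinuousAt G1 0 := (hasDerivAt_G1 h0).differentiableAt.continuousAt
  have termA : HasDerivAt (fun a => gg a * (-2 * χ (gg a) * (G1 a * G1 a)))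
      (G1 0 * (-2 * χ (gg 0) * (G1 0 * G1 0))) 0 :=
    hasDerivAt_mul_of_zero (hasDerivAt_gg h0) gg_zero
      (((continuousAt_const.mul hχcont)).mul (hG1cont.mul hG1cont))
  have termB : HasDerivAt (fun a => G2 a * ψ₁ (gg a))
      ((3 / Real.sqrt 2) * ψ₁ (gg 0)) 0 :=
    hasDerivAt_mul_of_zero hasDerivAt_G2_zero G2_zero hψ₁cont
  have h3 : HasDerivAt D2
      ((2 / Real.sqrt π) * (G1 0 * (-2 * χ (gg 0) * (G1 0 * G1 0))
        + (3 / Real.sqrt 2) * ψ₁ (gg 0))) 0 :=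
    (termA.add termB).const_mul (2 / Real.sqrt π)
  have hiter : iteratedDeriv 3 φ 0 = deriv (deriv (deriv φ)) 0 := by
    rw [iteratedDeriv_eq_iterate]
    rfl
  have hval : iteratedDeriv 3 φ 0 =
      (2 / Real.sqrt π) * (G1 0 * (-2 * χ (gg 0) * (G1 0 * G1 0))
        + (3 / Real.sqrt 2) * ψ₁ (gg 0)) := by
    rw [hiter, hd2.deriv_eq, h3.deriv]
  have hχ0 : χ (gg 0) = ∫ x, x ^ 4 ∂μ := by
    rw [gg_zero]; simp [hχ]
  have hψ₁0 : ψ₁ (gg 0) = ∫ x, x ^ 2 ∂μ := by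
    rw [gg_zero]; simp [hψ₁]
  have hA : Real.sqrt 2 ^ 2 = 2 := Real.sq_sqrt (by norm_num)
  have hA0 : Real.sqrt 2 ≠ 0 := ne_of_gt sqrt2_pos
  have hBpos : 0 < Real.sqrt π := Real.sqrt_pos.2 Real.pi_pos
  have hB0 : Real.sqrt π ≠ 0 := ne_of_gt hBpos
  have hsd : Real.sqrt (2 / π) = Real.sqrt 2 / Real.sqrt π := Real.sqrt_div (by norm_num) π
  have hmain : iteratedDeriv 3 φ 0
      = Real.sqrt (2 / π) * (3 * ∫ x, x ^ 2 ∂μ - ∫ x, x ^ 4 ∂μ) := by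
    rw [hval, hχ0, hψ₁0, G1_zero, hsd]
    field_simp
    ring_nf
    linear_combination ((∫ x, x ^ 4 ∂μ) * (Real.sqrt 2 ^ 2 + 2) - 3 * (∫ x, x ^ 2 ∂μ) * Real.sqrt 2 ^ 2) * hA
  refine ⟨hmain, fun hE2 => ?_⟩
  rw [hmain, hE2]
  have hpos : 0 < Real.sqrt (2 / π) := Real.sqrt_pos.2 (div_pos two_pos Real.pi_pos)
  constructor <;> intro h <;> nlinarith
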